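/- Let X be a random variable and A a {0,1}-valued random variable, and define the propensity score e(X) = P(A = 1 | X). Then A is conditionally independent of X given e(X); equivalently, P(A = 1 | X, e(X)) = e(X) = P(A = 1 | e(X)) almost surely. -/

import Mathlib

open Classical in
noncomputable def Pr {Ω : Type*} [Fintype Ω] (w : Ω → ℝ) (p : Ω → Prop) : ℝ :=
  ∑ ω : Ω, if p ω then w ω else 0

open Classical

lemma Pr_congr {Ω : Type*} [Fintype Ω] (w : Ω → ℝ) {p q : Ω → Prop}
    (h : ∀ ω, p ω ↔ q ω) : Pr w p = Pr w q := by
  unfold Pr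
  exact Finset.sum_congr rfl fun ω _ => by rw [h ω]

lemma Pr_nonneg {Ω : Type*} [Fintype Ω] (w : Ω → ℝ) (hw0 : ∀ ω, 0 ≤ w ω)
    (p : Ω → Prop) : 0 ≤ Pr w p :=
  Finset.sum_nonneg fun ω _ => by by_cases h : p ω <;> simp [h, hw0 ω]

lemma Pr_mono {Ω : Type*} [Fintype Ω] (w : Ω → ℝ) (hw0 : ∀ ω, 0 ≤ w ω)
    {p q : Ω → Prop} (h : ∀ ω, p ω → q ω) : Pr w p ≤ Pr w q := by
  refine Finset.sum_le_sum fun ω _ => ?_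
  by_cases hp : p ω
  · simp [hp, h ω hp]
  · by_cases hq : q ω <;> simp [hp, hq, hw0 ω]

lemma Pr_split {Ω 𝒳 : Type*} [Fintype Ω] [Fintype 𝒳] (w : Ω → ℝ)
    (p : Ω → Prop) (X : Ω → 𝒳) :
    Pr w p = ∑ x : 𝒳, Pr w (fun ω => p ω ∧ X ω = x) := by
  unfold Pr
  rw [Finset.sum_comm]
  refine Finset.sum_congr rfl fun ω _ => ?_
  by_cases h : p ω
  · simp [h, Finset.sum_ite_eq]
  · simp [h]

/-- Rosenbaum–Rubin balancing property of the propensity score `e(x) = P(A=1 | X=x)`: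
`P(A=1 | e(X) = v) = v` whenever `P(e(X) = v) > 0`; consequently `A ⫫ X | e(X)`,
i.e. `P(A=1 ∧ X=x | e(X)=v)` factorizes. -/
theorem propensity_balancing
    {Ω 𝒳 : Type*} [Fintype Ω] [Fintype 𝒳]
    (w : Ω → ℝ) (hw0 : ∀ ω, 0 ≤ w ω) (hw1 : ∑ ω : Ω, w ω = 1)
    (X : Ω → 𝒳) (A : Ω → ℕ) (hA : ∀ ω, A ω = 0 ∨ A ω = 1)
    (e : 𝒳 → ℝ)
    (he : ∀ x : 𝒳, e x = Pr w (fun ω => A ω = 1 ∧ X ω = x) / Pr w (fun ω => X ω = x)) :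
    (∀ v : ℝ, 0 < Pr w (fun ω => e (X ω) = v) →
      Pr w (fun ω => A ω = 1 ∧ e (X ω) = v) / Pr w (fun ω => e (X ω) = v) = v) ∧
    (∀ (x : 𝒳) (v : ℝ),
      Pr w (fun ω => A ω = 1 ∧ X ω = x ∧ e (X ω) = v) * Pr w (fun ω => e (X ω) = v)
        = Pr w (fun ω => A ω = 1 ∧ e (X ω) = v) * Pr w (fun ω => X ω = x ∧ e (X ω) = v)) := by
  set N : 𝒳 → ℝ := fun x => Pr w (fun ω => A ω = 1 ∧ X ω = x) with hN
  set D : 𝒳 → ℝ := fun x => Pr w (fun ω => X ω = x) with hD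
  -- key: N x = e x * D x
  have key : ∀ x, N x = e x * D x := by
    intro x
    by_cases hDx : D x = 0
    · have hNle : N x ≤ D x := Pr_mono w hw0 fun ω h => h.2
      have hNge : 0 ≤ N x := Pr_nonneg w hw0 _
      have : N x = 0 := le_antisymm (hDx ▸ hNle) hNge
      rw [this, hDx, mul_zero]
    · rw [he x, div_mul_cancel₀ _ hDx]
  -- split any event intersected with e(X)=v over values of X
  have split : ∀ (p : Ω → Prop) (v : ℝ),
      Pr w (fun ω => p ω ∧ e (X ω) = v)
        = ∑ x : 𝒳, if e x = v then Pr w (fun ω => p ω ∧ X ω = x) else 0 := by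
    intro p v
    rw [Pr_split w _ X]
    refine Finset.sum_congr rfl fun x _ => ?_
    by_cases hx : e x = v
    · rw [if_pos hx]
      refine Pr_congr w fun ω => ?_
      constructor
      · rintro ⟨⟨hp, _⟩, hX⟩; exact ⟨hp, hX⟩
      · rintro ⟨hp, hX⟩; exact ⟨⟨hp, hX ▸ hx⟩, hX⟩
    · rw [if_neg hx]
      have : ∀ ω, ((p ω ∧ e (X ω) = v) ∧ X ω = x) ↔ False := by
        intro ω
        simp only [iff_false]
        rintro ⟨⟨_, hv⟩, hX⟩
        exact hx (hX ▸ hv)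
      rw [Pr_congr w this]
      simp [Pr]
  have hS : ∀ v : ℝ, Pr w (fun ω => e (X ω) = v)
      = ∑ x : 𝒳, if e x = v then D x else 0 := by
    intro v
    have := split (fun _ => True) v
    simpa [Pr, hD] using this
  have hAS : ∀ v : ℝ, Pr w (fun ω => A ω = 1 ∧ e (X ω) = v)
      = v * Pr w (fun ω => e (X ω) = v) := by
    intro v
    rw [split (fun ω => A ω = 1) v, hS v, Finset.mul_sum]
    refine Finset.sum_congr rfl fun x _ => ?_
    by_cases hx : e x = v
    · rw [if_pos hx, if_pos hx]
      show N x = v * D x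
      rw [key x, hx]
    · simp [hx]
  constructor
  · intro v hv
    rw [hAS v, mul_div_assoc, div_self (ne_of_gt hv), mul_one]
  · intro x v
    by_cases hx : e x = v
    · have h1 : Pr w (fun ω => A ω = 1 ∧ X ω = x ∧ e (X ω) = v) = N x := by
        refine Pr_congr w fun ω => ?_
        constructor
        · rintro ⟨ha, hX, _⟩; exact ⟨ha, hX⟩
        · rintro ⟨ha, hX⟩; exact ⟨ha, hX, hX ▸ hx⟩
      have h2 : Pr w (fun ω => X ω = x ∧ e (X ω) = v) = D x := by
        refine Pr_congr w fun ω => ?_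
        constructor
        · rintro ⟨hX, _⟩; exact hX
        · intro hX; exact ⟨hX, hX ▸ hx⟩
      rw [h1, h2, hAS v, key x, hx]
      ring
    · have h1 : Pr w (fun ω => A ω = 1 ∧ X ω = x ∧ e (X ω) = v) = 0 := by
        have : ∀ ω, (A ω = 1 ∧ X ω = x ∧ e (X ω) = v) ↔ False := by
          intro ω
          simp only [iff_false]
          rintro ⟨_, hX, hv⟩
          exact hx (hX ▸ hv)
        rw [Pr_congr w this]; simp [Pr]
      have h2 : Pr w (fun ω => X ω = x ∧ e (X ω) = v) = 0 := by
        have : ∀ ω, (X ω = x ∧ e (X ω) = v) ↔ False := by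
          intro ω
          simp only [iff_false]
          rintro ⟨hX, hv⟩
          exact hx (hX ▸ hv)
        rw [Pr_congr w this]; simp [Pr]
      rw [h1, h2, zero_mul, mul_zero]
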